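/- Let n be a positive integer divisible by 2. Let D_1 and D_2 be sets of divisors of n, and let S_i = ⋃_{d∈D_i} G_n(d) for i = 1,2. If the multiset (λ_k(S_1))_{k∈[n]} equals the multiset (λ_k(S_2))_{k∈[n]} (i.e., the integral circulant graphs ICG(n,D_1) and ICG(n,D_2) are isospectral), then λ_{n/2}(S_1) = λ_{n/2}(S_2). -/

import Mathlib

open Finset

/-- `ω_n = exp(2πi/n)`. -/
noncomputable def omegaN (n : ℕ) : ℂ := Complex.exp (2 * Real.pi * Complex.I / n)

/-- `λ_k(S) = ∑_{g ∈ S} ω_n^{k g}`, the eigenvalues of the circulant graph `Cay(ℤ_n, S)`. -/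
noncomputable def lam (n : ℕ) (S : Finset ℕ) (k : ℕ) : ℂ :=
  ∑ g ∈ S, omegaN n ^ (k * g)

/-- The spectrum of `Cay(ℤ_n, S)`, i.e. the multiset `(λ_k(S))_{k ∈ [n]}`. -/
noncomputable def spec (n : ℕ) (S : Finset ℕ) : Multiset ℂ :=
  (Finset.Icc 1 n).val.map (lam n S)

/-- The connection set of `ICG(n, D)`:
`⋃_{d ∈ D} G_n(d) = {j ∈ [n] : gcd(j,n) ∈ D}` where `G_n(d) = {j ∈ [n] : gcd(j,n) = d}`. -/
def connSet (n : ℕ) (D : Finset ℕ) : Finset ℕ :=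
  (Finset.Icc 1 n).filter (fun j => Nat.gcd j n ∈ D)

lemma omegaN_pow_n {n : ℕ} (hn : n ≠ 0) : omegaN n ^ n = 1 :=
  (Complex.isPrimitiveRoot_exp n hn).pow_eq_one

lemma omegaN_abs {n : ℕ} (hn : n ≠ 0) : ‖omegaN n‖ = 1 :=
  Complex.norm_eq_one_of_pow_eq_one (omegaN_pow_n hn) hn

lemma omegaN_pow_mod {n : ℕ} (hn : n ≠ 0) (a : ℕ) :
    omegaN n ^ a = omegaN n ^ (a % n) := by
  conv_lhs => rw [← Nat.div_add_mod a n]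
  rw [pow_add, pow_mul, omegaN_pow_n hn, one_pow, one_mul]

lemma lam_n {n : ℕ} (hn : n ≠ 0) (S : Finset ℕ) : lam n S n = (S.card : ℂ) := by
  unfold lam
  rw [Finset.sum_congr rfl (fun g _ => by rw [pow_mul, omegaN_pow_n hn, one_pow])]
  simp

lemma abs_lam_le {n : ℕ} (hn : n ≠ 0) (S : Finset ℕ) (k : ℕ) :
    ‖lam n S k‖ ≤ (S.card : ℝ) := by
  calc ‖lam n S k‖ ≤ ∑ g ∈ S, ‖omegaN n ^ (k * g)‖ :=
        norm_sum_le _ _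
    _ = (S.card : ℝ) := by
        simp [map_pow, omegaN_abs hn]

lemma card_le_of_spec {n : ℕ} (hn : n ≠ 0) {S₁ S₂ : Finset ℕ}
    (h : spec n S₁ = spec n S₂) : S₁.card ≤ S₂.card := by
  have hmem : (S₁.card : ℂ) ∈ spec n S₂ := by
    rw [← h]
    exact Multiset.mem_map.mpr ⟨n, by simp [Nat.one_le_iff_ne_zero.mpr hn], lam_n hn S₁⟩
  obtain ⟨k, _, hlam⟩ := Multiset.mem_map.mp hmem
  have hb := abs_lam_le hn S₂ k
  rw [hlam] at hb
  simp only [Complex.norm_natCast] at hb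
  exact_mod_cast hb

lemma gcd_flip {n : ℕ} (hn : n ≠ 0) (g : ℕ) :
    Nat.gcd (n - g % n) n = Nat.gcd g n := by
  have hmn : g % n ≤ n := (Nat.mod_lt g (Nat.pos_of_ne_zero hn)).le
  have h1 : Nat.gcd (n - g % n) (n - (n - g % n)) = Nat.gcd (n - g % n) n :=
    Nat.gcd_sub_self_right (Nat.sub_le n _)
  rw [Nat.sub_sub_self hmn] at h1
  rw [← h1, Nat.gcd_sub_self_left hmn, Nat.gcd_comm n (g % n),
    ← Nat.gcd_rec n g, Nat.gcd_comm]

lemma omegaN_pow_flip {n k g : ℕ} (hn : n ≠ 0) (hk : k ≤ n) :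
    omegaN n ^ ((n - k) * g) = omegaN n ^ (k * (n - g % n)) := by
  rw [omegaN_pow_mod hn, omegaN_pow_mod hn (k * (n - g % n))]
  congr 1
  have hglt : g % n < n := Nat.mod_lt g (Nat.pos_of_ne_zero hn)
  have h1 : (n - k) * g + k * g = n * g := by
    rw [← Nat.add_mul, Nat.sub_add_cancel hk]
  have h2 : k * (n - g % n) + k * (g % n) = k * n := by
    rw [← Nat.mul_add, Nat.add_comm, Nat.add_sub_cancel' hglt.le]
  have hc : k * g ≡ k * (g % n) [MOD n] := ((Nat.mod_modEq g n).symm).mul_left k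
  have h0 : (n - k) * g + k * g ≡ k * (n - g % n) + k * (g % n) [MOD n] := by
    rw [h1, h2]
    exact ((Nat.modEq_zero_iff_dvd).mpr ⟨g, rfl⟩).trans
      ((Nat.modEq_zero_iff_dvd).mpr ⟨k, Nat.mul_comm k n⟩).symm
  exact Nat.ModEq.add_right_cancel hc h0

lemma lam_flip {n : ℕ} (hn : n ≠ 0) (D : Finset ℕ) {k : ℕ} (hk : k ≤ n) :
    lam n (connSet n D) (n - k) = lam n (connSet n D) k := by
  have hpos := Nat.pos_of_ne_zero hn
  unfold lam
  refine Finset.sum_nbij' (fun g => n - g % n) (fun g => n - g % n) ?_ ?_ ?_ ?_ ?_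
  · intro g hg
    simp only [connSet, Finset.mem_filter, Finset.mem_Icc] at hg ⊢
    refine ⟨⟨Nat.le_sub_of_add_le ?_, Nat.sub_le _ _⟩, by rw [gcd_flip hn]; exact hg.2⟩
    have := Nat.mod_lt g hpos
    omega
  · intro g hg
    simp only [connSet, Finset.mem_filter, Finset.mem_Icc] at hg ⊢
    refine ⟨⟨Nat.le_sub_of_add_le ?_, Nat.sub_le _ _⟩, by rw [gcd_flip hn]; exact hg.2⟩
    have := Nat.mod_lt g hpos
    omega
  · intro g hg
    show n - (n - g % n) % n = g
    simp only [connSet, Finset.mem_filter, Finset.mem_Icc] at hg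
    obtain ⟨⟨h1, h2⟩, _⟩ := hg
    rcases eq_or_lt_of_le h2 with rfl | hlt
    · simp
    · rw [Nat.mod_eq_of_lt hlt, Nat.mod_eq_of_lt (by omega), Nat.sub_sub_self h2]
  · intro g hg
    show n - (n - g % n) % n = g
    simp only [connSet, Finset.mem_filter, Finset.mem_Icc] at hg
    obtain ⟨⟨h1, h2⟩, _⟩ := hg
    rcases eq_or_lt_of_le h2 with rfl | hlt
    · simp
    · rw [Nat.mod_eq_of_lt hlt, Nat.mod_eq_of_lt (by omega), Nat.sub_sub_self h2]
  · intro g _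
    exact omegaN_pow_flip hn hk

lemma zmod2_add_self (x : ZMod 2) : x + x = 0 := by
  rw [← two_mul, show (2 : ZMod 2) = 0 from rfl, zero_mul]

lemma sum_F {n : ℕ} (hn : n ≠ 0) (h2 : 2 ∣ n) (D : Finset ℕ) (F : ℂ → ZMod 2) :
    ∑ k ∈ Finset.Icc 1 n, F (lam n (connSet n D) k)
      = F (lam n (connSet n D) (n / 2)) + F (lam n (connSet n D) n) := by
  have hn2 : 2 ≤ n := Nat.le_of_dvd (Nat.pos_of_ne_zero hn) h2
  have hdiv : n / 2 * 2 = n := Nat.div_mul_cancel h2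
  have hmemn : n ∈ Finset.Icc 1 n := by simp [Nat.one_le_iff_ne_zero.mpr hn]
  have hmemh : n / 2 ∈ (Finset.Icc 1 n).erase n := by
    simp only [Finset.mem_erase, Finset.mem_Icc]
    omega
  rw [← Finset.add_sum_erase _ _ hmemn, ← Finset.add_sum_erase _ _ hmemh]
  have hzero :
      ∑ k ∈ ((Finset.Icc 1 n).erase n).erase (n / 2), F (lam n (connSet n D) k) = 0 := by
    refine Finset.sum_involution (fun k _ => n - k) ?_ ?_ ?_ ?_
    · intro k hk
      simp only [Finset.mem_erase, Finset.mem_Icc] at hk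
      show F (lam n (connSet n D) k) + F (lam n (connSet n D) (n - k)) = 0
      rw [lam_flip hn D hk.2.2.2]
      exact zmod2_add_self _
    · intro k hk _
      show n - k ≠ k
      simp only [Finset.mem_erase, Finset.mem_Icc] at hk
      omega
    · intro k hk
      show n - k ∈ ((Finset.Icc 1 n).erase n).erase (n / 2)
      simp only [Finset.mem_erase, Finset.mem_Icc] at hk ⊢
      omega
    · intro k hk
      show n - (n - k) = k
      simp only [Finset.mem_erase, Finset.mem_Icc] at hk
      omega
  rw [hzero, add_zero, add_comm]

/-- For even `n`, isospectral integral circulant graphs have equal eigenvalue at `n/2`. -/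
theorem lam_half_eq_of_isospectral
    (n : ℕ) (hn : 0 < n) (h2 : 2 ∣ n)
    (D₁ D₂ : Finset ℕ)
    (hD₁ : D₁ ⊆ n.divisors) (hD₂ : D₂ ⊆ n.divisors)
    (hspec : spec n (connSet n D₁) = spec n (connSet n D₂)) :
    lam n (connSet n D₁) (n / 2) = lam n (connSet n D₂) (n / 2) := by
  classical
  have hn' : n ≠ 0 := hn.ne'
  set S₁ := connSet n D₁ with hS₁
  set S₂ := connSet n D₂ with hS₂
  have hcard : S₁.card = S₂.card :=
    le_antisymm (card_le_of_spec hn' hspec) (card_le_of_spec hn' hspec.symm)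
  set a := lam n S₁ (n / 2) with ha
  set F : ℂ → ZMod 2 := fun z => if z = a then 1 else 0 with hF
  have hsum : ((spec n S₁).map F).sum = ((spec n S₂).map F).sum := by rw [hspec]
  rw [spec, spec, Multiset.map_map, Multiset.map_map] at hsum
  have hsum' : ∑ k ∈ Finset.Icc 1 n, F (lam n S₁ k)
      = ∑ k ∈ Finset.Icc 1 n, F (lam n S₂ k) := hsum
  rw [hS₁, hS₂] at hsum'
  rw [sum_F hn' h2 D₁ F, sum_F hn' h2 D₂ F] at hsum'
  rw [lam_n hn' (connSet n D₁), lam_n hn' (connSet n D₂), ← hS₁, ← hS₂, hcard] at hsum'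
  have hkey : F (lam n S₁ (n / 2)) = F (lam n S₂ (n / 2)) := by
    exact add_right_cancel hsum'
  rw [← ha] at hkey
  have h1 : F a = 1 := if_pos rfl
  rw [h1] at hkey
  by_contra hne
  have h0 : F (lam n S₂ (n / 2)) = 0 := by
    simp only [hF]
    exact if_neg (fun h => hne h.symm)
  rw [h0] at hkey
  exact one_ne_zero hkey
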